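/- Let (Ω, F, P) be a probability space, W : Ω → ℝ a random variable, K > 0 and b < 0 real numbers, and suppose E[e^{bW}] < ∞. Then the function s ↦ K^{1-(b+is)} · E[e^{(b+is)W}] / ((b+is)(b+is-1)) is Lebesgue integrable over ℝ, and E[max(K - e^W, 0)] = (1/(2π)) · ∫_{-∞}^{∞} K^{1-(b+is)} · E[e^{(b+is)W}] / ((b+is)(b+is-1)) ds, where the complex integral on the right equals the real number on the left. -/

import Mathlib

open MeasureTheory Complex

open Set Filter Topology Real
open scoped FourierTransform

noncomputable section AsianAuxSection

namespace AsianAux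

lemma integrableOn_cexp_neg_Ioi (c : ℂ) (hc : 0 < c.re) (a : ℝ) :
    IntegrableOn (fun x : ℝ => Complex.exp (-(c * x))) (Ioi a) := by
  have hn : ∀ x : ℝ, ‖Complex.exp (-(c * x))‖ = Real.exp (-c.re * x) := by
    intro x
    rw [Complex.norm_exp]
    congr 1
    simp [Complex.mul_re]
  refine Integrable.mono' (exp_neg_integrableOn_Ioi a hc) ?_ ?_
  · exact (Complex.continuous_exp.comp (by continuity)).aestronglyMeasurable
  · filter_upwards with x
    rw [hn x]

lemma integral_Ioi_cexp_neg (c : ℂ) (hc : 0 < c.re) (a : ℝ) :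
    ∫ x in Ioi a, Complex.exp (-(c * x)) = Complex.exp (-(c * a)) / c := by
  have hc0 : c ≠ 0 := fun h => by simp [h] at hc
  have hderiv : ∀ x ∈ Ici a, HasDerivAt (fun y : ℝ => -Complex.exp (-(c * y)) / c)
      (Complex.exp (-(c * x))) x := by
    intro x _
    have h1 : HasDerivAt (fun z : ℂ => -Complex.exp (-(c * z)) / c)
        (Complex.exp (-(c * x))) (x : ℂ) := by
      have h2 : HasDerivAt (fun z : ℂ => -(c * z)) (-c) (x : ℂ) := by
        exact (((hasDerivAt_id (x : ℂ)).const_mul c).neg).congr_deriv (by simp)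
      have h3 := (h2.cexp).neg.div_const c
      exact h3.congr_deriv (by rw [mul_neg, neg_neg, mul_div_assoc, div_self hc0, mul_one])
    exact h1.comp_ofReal
  have htend : Tendsto (fun y : ℝ => -Complex.exp (-(c * y)) / c) atTop (𝓝 0) := by
    rw [tendsto_zero_iff_norm_tendsto_zero]
    have hn : ∀ y : ℝ, ‖-Complex.exp (-(c * y)) / c‖ = Real.exp (-(c.re * y)) / ‖c‖ := by
      intro y
      rw [norm_div, norm_neg, Complex.norm_exp]
      congr 2
      simp [Complex.mul_re]
    simp only [hn]
    have h1 : Tendsto (fun y : ℝ => -(c.re * y)) atTop atBot := by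
      apply tendsto_neg_atBot_iff.mpr
      exact Tendsto.const_mul_atTop hc tendsto_id
    simpa using (Real.tendsto_exp_atBot.comp h1).div_const ‖c‖
  have := integral_Ioi_of_hasDerivAt_of_tendsto' hderiv (integrableOn_cexp_neg_Ioi c hc a) htend
  rw [this]
  field_simp
  ring

lemma integrableOn_cexp_Iic (c : ℂ) (hc : 0 < c.re) (L : ℝ) :
    IntegrableOn (fun x : ℝ => Complex.exp (c * x)) (Iic L) := by
  have A : MeasurableEmbedding fun x : ℝ => -x :=
    (Homeomorph.neg ℝ).measurableEmbedding
  rw [show (volume : Measure ℝ) = Measure.map (fun x : ℝ => -x) volume from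
    (Measure.map_neg_eq_self _).symm, A.integrableOn_map_iff]
  have heq : ((fun x : ℝ => Complex.exp (c * x)) ∘ fun x : ℝ => -x)
      = fun x : ℝ => Complex.exp (-(c * x)) := by
    funext x; simp only [Function.comp_apply]; congr 1; push_cast; ring
  have hpre : (fun x : ℝ => -x) ⁻¹' Iic L = Ici (-L) := by
    ext x; simp [neg_le]
  rw [heq, hpre]
  exact (integrableOn_cexp_neg_Ioi c hc (-L)).congr_set_ae Ioi_ae_eq_Ici.symm

lemma integral_Iic_cexp (c : ℂ) (hc : 0 < c.re) (L : ℝ) :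
    ∫ x in Iic L, Complex.exp (c * x) = Complex.exp (c * L) / c := by
  have h1 : ∀ x : ℝ, Complex.exp (c * x) = (fun y : ℝ => Complex.exp (-(c * y))) (-x) := by
    intro x; push_cast; ring_nf
  calc ∫ x in Iic L, Complex.exp (c * x)
      = ∫ x in Iic L, (fun y : ℝ => Complex.exp (-(c * y))) (-x) := by
        refine setIntegral_congr_fun measurableSet_Iic fun x _ => h1 x
    _ = ∫ x in Ioi (-L), Complex.exp (-(c * x)) :=
        integral_comp_neg_Iic L (fun y : ℝ => Complex.exp (-(c * y)))
    _ = Complex.exp (-(c * ((-L : ℝ) : ℂ))) / c := integral_Ioi_cexp_neg c hc (-L)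
    _ = Complex.exp (c * L) / c := by congr 2; push_cast; ring


/-- The Mellin-type transform of the put payoff. -/
lemma transform_eq {K : ℝ} (hK : 0 < K) {z : ℂ} (hz : z.re < 0) :
    ∫ x : ℝ, Complex.exp (-(z * x)) * ((max (K - Real.exp x) 0 : ℝ) : ℂ)
      = (K : ℂ) ^ ((1 : ℂ) - z) / (z * (z - 1)) := by
  have hK0 : (K : ℂ) ≠ 0 := by exact_mod_cast hK.ne'
  have hz0 : z ≠ 0 := fun h => by simp [h] at hz
  have hz1 : z - 1 ≠ 0 := by
    intro h
    have : z.re - 1 = 0 := by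
      have := congrArg Complex.re h; simpa using this
    linarith
  have h1z : (1 : ℂ) - z ≠ 0 := by
    intro h; apply hz1; rw [← neg_eq_zero]; rw [← h]; ring_nf
  set L := Real.log K with hL
  have hKL : Real.exp L = K := Real.exp_log hK
  -- restrict to Iic L
  have hsupp : ∀ x : ℝ, x ∉ Iic L → Complex.exp (-(z * x)) * ((max (K - Real.exp x) 0 : ℝ) : ℂ) = 0 := by
    intro x hx
    rw [mem_Iic, not_le] at hx
    have : Real.exp x > K := by rw [← hKL]; exact Real.exp_lt_exp.mpr hx
    rw [max_eq_right (by linarith)]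
    simp
  rw [← setIntegral_eq_integral_of_forall_compl_eq_zero hsupp]
  -- on Iic L the integrand splits
  have hcongr : ∀ x ∈ Iic L,
      Complex.exp (-(z * x)) * ((max (K - Real.exp x) 0 : ℝ) : ℂ)
        = (K : ℂ) * Complex.exp (-z * x) - Complex.exp ((1 - z) * x) := by
    intro x hx
    rw [mem_Iic] at hx
    have hexp : Real.exp x ≤ K := by rw [← hKL]; exact Real.exp_le_exp.mpr hx
    rw [max_eq_left (by linarith)]
    have he : Complex.exp (-(z * x)) * Complex.exp (x : ℂ) = Complex.exp ((1 - z) * x) := by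
      rw [← Complex.exp_add]; congr 1; ring
    push_cast
    rw [← Complex.ofReal_exp]
    push_cast
    rw [mul_sub, he]
    ring_nf
  rw [setIntegral_congr_fun measurableSet_Iic hcongr]
  have hi1 : IntegrableOn (fun x : ℝ => (K : ℂ) * Complex.exp (-z * x)) (Iic L) :=
    (integrableOn_cexp_Iic (-z) (by simpa using hz) L).const_mul _
  have hi2 : IntegrableOn (fun x : ℝ => Complex.exp ((1 - z) * x)) (Iic L) :=
    integrableOn_cexp_Iic (1 - z) (by simp; linarith) L
  rw [integral_sub hi1 hi2, integral_const_mul, integral_Iic_cexp (-z) (by simpa using hz) L,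
    integral_Iic_cexp (1 - z) (by simp; linarith) L]
  have hcpow : ∀ w : ℂ, (K : ℂ) ^ w = Complex.exp (w * L) := by
    intro w
    rw [Complex.cpow_def_of_ne_zero hK0, ← Complex.ofReal_log hK.le, mul_comm]
  rw [show Complex.exp (-z * L) = (K : ℂ) ^ (-z) from (hcpow _).symm,
    show Complex.exp ((1 - z) * L) = (K : ℂ) ^ ((1:ℂ) - z) from (hcpow _).symm]
  have hBA : (K : ℂ) ^ ((1:ℂ) - z) = K * (K : ℂ) ^ (-z) := by
    rw [show (1:ℂ) - z = 1 + (-z) by ring, Complex.cpow_add _ _ hK0, Complex.cpow_one]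
  rw [hBA]
  field_simp [hz0, hz1, h1z]
  ring

/-- auxiliary function -/
def Gc (K b : ℝ) (s : ℝ) : ℂ :=
  (K : ℂ) ^ ((1 : ℂ) - ((b : ℂ) + s * Complex.I)) /
    (((b : ℂ) + s * Complex.I) * (((b : ℂ) + s * Complex.I) - 1))

lemma zb_re (b s : ℝ) : ((b : ℂ) + s * Complex.I).re = b := by simp

lemma zb_ne {b : ℝ} (hb : b < 0) (s : ℝ) : ((b : ℂ) + s * Complex.I) ≠ 0 := by
  intro h
  have := congrArg Complex.re h
  rw [zb_re] at this
  simp at this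
  linarith

lemma zb_sub_one_ne {b : ℝ} (hb : b < 0) (s : ℝ) : ((b : ℂ) + s * Complex.I) - 1 ≠ 0 := by
  intro h
  have := congrArg Complex.re h
  simp at this
  linarith

lemma Gc_continuous {K b : ℝ} (hK : 0 < K) (hb : b < 0) : Continuous (Gc K b) := by
  have hK0 : (K : ℂ) ≠ 0 := by exact_mod_cast hK.ne'
  have hz : Continuous fun s : ℝ => (b : ℂ) + s * Complex.I := by continuity
  apply Continuous.div
  · exact Continuous.const_cpow (by continuity) (Or.inl hK0)
  · exact (hz.mul (hz.sub continuous_const))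
  · intro s
    exact mul_ne_zero (zb_ne hb s) (zb_sub_one_ne hb s)

lemma Gc_norm_le {K b : ℝ} (hK : 0 < K) (hb : b < 0) (s : ℝ) :
    ‖Gc K b s‖ ≤ (K ^ (1 - b) * (min (b ^ 2) 1)⁻¹) * (1 + s ^ 2)⁻¹ := by
  have hb2 : (0:ℝ) < b ^ 2 := by nlinarith
  have hm : 0 < min (b ^ 2) 1 := lt_min hb2 one_pos
  have hnum : ‖(K : ℂ) ^ ((1 : ℂ) - ((b : ℂ) + s * Complex.I))‖ = K ^ (1 - b) := by
    rw [Complex.norm_cpow_eq_rpow_re_of_pos hK]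
    congr 1
    simp
  have habs1 : ‖(b : ℂ) + s * Complex.I‖ = Real.sqrt (b ^ 2 + s ^ 2) :=
    Complex.norm_add_mul_I b s
  have habs2 : ‖((b : ℂ) + s * Complex.I) - 1‖ = Real.sqrt ((b - 1) ^ 2 + s ^ 2) := by
    rw [show ((b : ℂ) + s * Complex.I) - 1 = ((b - 1 : ℝ) : ℂ) + (s : ℝ) * Complex.I by push_cast; ring]
    exact Complex.norm_add_mul_I _ _
  have hden : min (b ^ 2) 1 * (1 + s ^ 2) ≤
      ‖(((b : ℂ) + s * Complex.I) * (((b : ℂ) + s * Complex.I) - 1))‖ := by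
    rw [norm_mul, habs1, habs2]
    have h1 : Real.sqrt (b ^ 2 + s ^ 2) * Real.sqrt (b ^ 2 + s ^ 2) ≤
        Real.sqrt (b ^ 2 + s ^ 2) * Real.sqrt ((b - 1) ^ 2 + s ^ 2) := by
      apply mul_le_mul_of_nonneg_left _ (Real.sqrt_nonneg _)
      apply Real.sqrt_le_sqrt
      nlinarith
    have h2 : Real.sqrt (b ^ 2 + s ^ 2) * Real.sqrt (b ^ 2 + s ^ 2) = b ^ 2 + s ^ 2 :=
      Real.mul_self_sqrt (by positivity)
    have h3 : min (b ^ 2) 1 * (1 + s ^ 2) ≤ b ^ 2 + s ^ 2 := by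
      have ha := min_le_left (b ^ 2) 1
      have hb' := min_le_right (b ^ 2) 1
      nlinarith [sq_nonneg s]
    linarith
  have hpos : (0:ℝ) < min (b ^ 2) 1 * (1 + s ^ 2) := by
    apply mul_pos hm; positivity
  calc ‖Gc K b s‖ = K ^ (1 - b) / ‖(((b : ℂ) + s * Complex.I) * (((b : ℂ) + s * Complex.I) - 1))‖ := by
        rw [Gc, norm_div, hnum]
    _ ≤ K ^ (1 - b) / (min (b ^ 2) 1 * (1 + s ^ 2)) :=
        div_le_div_of_nonneg_left (by positivity) hpos hden
    _ = (K ^ (1 - b) * (min (b ^ 2) 1)⁻¹) * (1 + s ^ 2)⁻¹ := by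
        field_simp

lemma Gc_integrable {K b : ℝ} (hK : 0 < K) (hb : b < 0) : Integrable (Gc K b) := by
  refine Integrable.mono' (integrable_inv_one_add_sq.const_mul (K ^ (1 - b) * (min (b ^ 2) 1)⁻¹))
    (Gc_continuous hK hb).aestronglyMeasurable ?_
  filter_upwards with s
  exact Gc_norm_le hK hb s


variable {K b : ℝ}

/-- the de-exponentiated payoff -/
def pf (K b : ℝ) (x : ℝ) : ℂ :=
  Complex.exp (-(b : ℂ) * x) * ((max (K - Real.exp x) 0 : ℝ) : ℂ)

lemma pf_continuous (K b : ℝ) : Continuous (pf K b) := by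
  apply Continuous.mul
  · exact Complex.continuous_exp.comp (by continuity)
  · exact Complex.continuous_ofReal.comp ((continuous_const.sub Real.continuous_exp).max
      continuous_const)

lemma pf_integrable (hK : 0 < K) (hb : b < 0) : Integrable (pf K b) := by
  set L := Real.log K with hL
  have hKL : Real.exp L = K := Real.exp_log hK
  have hsupp : ∀ x : ℝ, x ∉ Iic L → pf K b x = 0 := by
    intro x hx
    rw [mem_Iic, not_le] at hx
    have : Real.exp x > K := by rw [← hKL]; exact Real.exp_lt_exp.mpr hx
    rw [pf, max_eq_right (by linarith)]
    simp
  have hind : pf K b = (Iic L).indicator (pf K b) := by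
    funext x
    by_cases h : x ∈ Iic L
    · rw [Set.indicator_of_mem h]
    · rw [Set.indicator_of_notMem h, hsupp x h]
  rw [hind, integrable_indicator_iff measurableSet_Iic]
  have hintK : IntegrableOn (fun x : ℝ => Real.exp (-b * x) * K) (Iic L) := by
    have h0 : (0:ℝ) < (-(b:ℂ)).re := by simp; linarith
    have h1 := (integrableOn_cexp_Iic (-(b : ℂ)) h0 L).norm
    have h2 : (fun x : ℝ => ‖Complex.exp (-(b : ℂ) * x)‖) = fun x : ℝ => Real.exp (-b * x) := by
      funext x
      rw [Complex.norm_exp]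
      congr 1
      simp [Complex.mul_re]
    rw [h2] at h1
    exact h1.mul_const K
  refine Integrable.mono' hintK ((pf_continuous K b).aestronglyMeasurable.restrict) ?_
  filter_upwards with x
  rw [pf, norm_mul, Complex.norm_exp]
  have h1 : (-(b:ℂ) * x).re = -b * x := by simp [Complex.mul_re]
  rw [h1, Complex.norm_real, Real.norm_eq_abs]
  have hax : |max (K - Real.exp x) 0| ≤ K := by
    rw [_root_.abs_of_nonneg (le_max_right (K - Real.exp x) (0:ℝ))]
    exact max_le (by linarith [Real.exp_pos x]) hK.le
  exact mul_le_mul_of_nonneg_left hax (Real.exp_pos _).le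

lemma fourier_pf (hK : 0 < K) (hb : b < 0) (ξ : ℝ) :
    𝓕 (pf K b) ξ = Gc K b (2 * π * ξ) := by
  rw [Real.fourier_real_eq_integral_exp_smul]
  have hco : ∀ x : ℝ, Complex.exp (↑(-2 * π * x * ξ) * Complex.I) • pf K b x
      = Complex.exp (-(((b : ℂ) + (2 * π * ξ : ℝ) * Complex.I) * x)) *
        ((max (K - Real.exp x) 0 : ℝ) : ℂ) := by
    intro x
    rw [smul_eq_mul, pf, ← mul_assoc, ← Complex.exp_add]
    congr 2
    push_cast
    ring
  simp_rw [hco]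
  rw [transform_eq hK (z := (b : ℂ) + (2 * π * ξ : ℝ) * Complex.I) (by simp [hb])]
  rfl

lemma fourier_pf_integrable (hK : 0 < K) (hb : b < 0) :
    Integrable (𝓕 (pf K b)) := by
  have : 𝓕 (pf K b) = fun ξ : ℝ => Gc K b (2 * π * ξ) :=
    funext fun ξ => fourier_pf hK hb ξ
  rw [this]
  exact (Gc_integrable hK hb).comp_mul_left' (by positivity : (0:ℝ) < 2 * π).ne'

/-- pointwise Mellin/Fourier inversion of the put payoff -/
lemma put_inversion (hK : 0 < K) (hb : b < 0) (x : ℝ) :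
    ((max (K - Real.exp x) 0 : ℝ) : ℂ)
      = (((2 * π)⁻¹ : ℝ) : ℂ) * ∫ s : ℝ,
          Complex.exp (((b : ℂ) + s * Complex.I) * x) * Gc K b s := by
  have h2pi : (0:ℝ) < 2 * π := by positivity
  have hinv : 𝓕⁻ (𝓕 (pf K b)) x = pf K b x :=
    (pf_integrable hK hb).fourierInv_fourier_eq (fourier_pf_integrable hK hb)
      (pf_continuous K b).continuousAt
  rw [fourierInv_eq_fourier_neg,
    Real.fourier_real_eq_integral_exp_smul] at hinv
  have hco : (fun ξ : ℝ => Complex.exp (↑(-2 * π * ξ * (-x)) * Complex.I) • 𝓕 (pf K b) ξ)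
      = fun ξ : ℝ => (fun s : ℝ => Complex.exp (↑(s * x) * Complex.I) * Gc K b s) (2 * π * ξ) := by
    funext ξ
    rw [smul_eq_mul, fourier_pf hK hb ξ]
    congr 2
    push_cast
    ring
  rw [hco, MeasureTheory.Measure.integral_comp_mul_left
    (fun s : ℝ => Complex.exp (↑(s * x) * Complex.I) * Gc K b s) (2 * π)] at hinv
  -- hinv : |(2π)⁻¹| • ∫ s, exp(sxI) * Gc = pf K b x
  have habs : |(2 * π)⁻¹| = (2 * π)⁻¹ := abs_of_pos (by positivity)
  rw [habs] at hinv
  have hexp : Complex.exp ((b : ℂ) * x) * pf K b x = ((max (K - Real.exp x) 0 : ℝ) : ℂ) := by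
    rw [pf, ← mul_assoc, ← Complex.exp_add]
    ring_nf
    rw [Complex.exp_zero, one_mul]
  rw [← hexp, ← hinv]
  rw [Complex.real_smul, ← mul_assoc, mul_comm (Complex.exp ((b:ℂ) * ↑x)) _, mul_assoc]
  congr 1
  rw [← MeasureTheory.integral_const_mul]
  congr 1
  funext s
  rw [← mul_assoc, ← Complex.exp_add]
  congr 2
  push_cast
  ring


end AsianAux

open AsianAux

set_option maxHeartbeats 1000000 in
/-- Core pricing identity for average-strike Geometric Asian call options (after a
change of numeraire): if `K > 0`, `b < 0` and `E[e^{bW}] < ∞`, then the transform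
integrand is integrable over the vertical line and
`E[(K - e^W)_+] = (1/(2π)) ∫ K^{1-(b+is)} E[e^{(b+is)W}] / ((b+is)(b+is-1)) ds`. -/
theorem asian_put_pricing_identity
    {Ω : Type*} [MeasurableSpace Ω] (P : Measure Ω) [IsProbabilityMeasure P]
    (W : Ω → ℝ) (hW : Measurable W) (K b : ℝ) (hK : 0 < K) (hb : b < 0)
    (hint : Integrable (fun ω => Real.exp (b * W ω)) P) :
    Integrable (fun s : ℝ =>
      (K : ℂ) ^ ((1 : ℂ) - ((b : ℂ) + s * Complex.I)) *
        (∫ ω, Complex.exp (((b : ℂ) + s * Complex.I) * (W ω : ℂ)) ∂P) /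
        (((b : ℂ) + s * Complex.I) * (((b : ℂ) + s * Complex.I) - 1))) ∧
    ((∫ ω, max (K - Real.exp (W ω)) 0 ∂P : ℝ) : ℂ)
      = (1 / (2 * Real.pi) : ℂ) * ∫ s : ℝ,
          (K : ℂ) ^ ((1 : ℂ) - ((b : ℂ) + s * Complex.I)) *
            (∫ ω, Complex.exp (((b : ℂ) + s * Complex.I) * (W ω : ℂ)) ∂P) /
            (((b : ℂ) + s * Complex.I) * (((b : ℂ) + s * Complex.I) - 1)) := by
  have hGc := Gc_integrable hK hb
  have hGcc := Gc_continuous hK hb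
  set M : ℝ → ℂ := fun s => ∫ ω, Complex.exp (((b : ℂ) + s * Complex.I) * (W ω : ℂ)) ∂P with hM
  set C0 : ℝ := ∫ ω, Real.exp (b * W ω) ∂P with hC0
  have hnormexp : ∀ (s : ℝ) (w : ℝ), ‖Complex.exp (((b : ℂ) + s * Complex.I) * (w : ℂ))‖
      = Real.exp (b * w) := by
    intro s w
    rw [Complex.norm_exp]
    congr 1
    rw [show ((b : ℂ) + s * Complex.I) * (w : ℂ) = ((b * w : ℝ) : ℂ) + ((s * w : ℝ) : ℂ) * Complex.I
      by push_cast; ring]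
    simp
  -- measurability of M
  have hjoint : Measurable fun p : ℝ × Ω => Complex.exp (((b : ℂ) + p.1 * Complex.I) * (W p.2 : ℂ)) := by
    apply Complex.measurable_exp.comp
    exact ((measurable_const.add ((Complex.measurable_ofReal.comp measurable_fst).mul
      measurable_const)).mul (Complex.measurable_ofReal.comp (hW.comp measurable_snd)))
  have hMmeas : AEStronglyMeasurable M volume :=
    (hjoint.stronglyMeasurable.integral_prod_right').aestronglyMeasurable
  have hMbound : ∀ s : ℝ, ‖M s‖ ≤ C0 := by
    intro s
    calc ‖M s‖ ≤ ∫ ω, ‖Complex.exp (((b : ℂ) + s * Complex.I) * (W ω : ℂ))‖ ∂P :=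
          norm_integral_le_integral_norm _
      _ = C0 := by
          rw [hC0]
          exact integral_congr_ae (Eventually.of_forall fun ω => hnormexp s (W ω))
  -- first conjunct
  have h1 : Integrable (fun s : ℝ => Gc K b s * M s) := by
    refine Integrable.mono' (hGc.norm.mul_const C0) (hGcc.aestronglyMeasurable.mul hMmeas) ?_
    filter_upwards with s
    rw [norm_mul]
    exact mul_le_mul_of_nonneg_left (hMbound s) (norm_nonneg _)
  have hfe : (fun s : ℝ =>
      (K : ℂ) ^ ((1 : ℂ) - ((b : ℂ) + s * Complex.I)) * M s /
        (((b : ℂ) + s * Complex.I) * (((b : ℂ) + s * Complex.I) - 1)))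
      = fun s : ℝ => Gc K b s * M s := by
    funext s
    rw [Gc]
    ring
  constructor
  · rw [show (fun s : ℝ =>
      (K : ℂ) ^ ((1 : ℂ) - ((b : ℂ) + s * Complex.I)) *
        (∫ ω, Complex.exp (((b : ℂ) + s * Complex.I) * (W ω : ℂ)) ∂P) /
        (((b : ℂ) + s * Complex.I) * (((b : ℂ) + s * Complex.I) - 1))) = fun s => Gc K b s * M s
      from hfe]
    exact h1
  -- Fubini
  have hswap : Integrable (fun p : Ω × ℝ =>
      Complex.exp (((b : ℂ) + p.2 * Complex.I) * (W p.1 : ℂ)) * Gc K b p.2) (P.prod volume) := by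
    refine Integrable.mono' (hint.mul_prod hGc.norm) ?_ ?_
    · have hm2 : Measurable fun p : Ω × ℝ =>
          Complex.exp (((b : ℂ) + p.2 * Complex.I) * (W p.1 : ℂ)) :=
        Complex.measurable_exp.comp
          ((measurable_const.add ((Complex.measurable_ofReal.comp measurable_snd).mul
            measurable_const)).mul (Complex.measurable_ofReal.comp (hW.comp measurable_fst)))
      exact (hm2.mul (hGcc.measurable.comp measurable_snd)).aestronglyMeasurable
    · filter_upwards with p
      rw [norm_mul, hnormexp p.2 (W p.1)]
  calc ((∫ ω, max (K - Real.exp (W ω)) 0 ∂P : ℝ) : ℂ)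
      = ∫ ω, ((max (K - Real.exp (W ω)) 0 : ℝ) : ℂ) ∂P := integral_ofReal.symm
    _ = ∫ ω, ((((2 * π)⁻¹ : ℝ) : ℂ) * ∫ s : ℝ,
          Complex.exp (((b : ℂ) + s * Complex.I) * (W ω : ℂ)) * Gc K b s) ∂P :=
        integral_congr_ae (Eventually.of_forall fun ω => put_inversion hK hb (W ω))
    _ = (((2 * π)⁻¹ : ℝ) : ℂ) * ∫ ω, (∫ s : ℝ,
          Complex.exp (((b : ℂ) + s * Complex.I) * (W ω : ℂ)) * Gc K b s) ∂P :=
        integral_const_mul _ _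
    _ = (((2 * π)⁻¹ : ℝ) : ℂ) * ∫ s : ℝ, (∫ ω,
          Complex.exp (((b : ℂ) + s * Complex.I) * (W ω : ℂ)) * Gc K b s ∂P) := by
        rw [integral_integral_swap hswap]
    _ = (((2 * π)⁻¹ : ℝ) : ℂ) * ∫ s : ℝ, M s * Gc K b s := by
        congr 1
        refine integral_congr_ae (Eventually.of_forall fun s => ?_)
        show (∫ ω, Complex.exp (((b : ℂ) + s * Complex.I) * (W ω : ℂ)) * Gc K b s ∂P)
          = M s * Gc K b s
        rw [integral_mul_const]
    _ = (1 / (2 * Real.pi) : ℂ) * ∫ s : ℝ,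
          (K : ℂ) ^ ((1 : ℂ) - ((b : ℂ) + s * Complex.I)) * M s /
            (((b : ℂ) + s * Complex.I) * (((b : ℂ) + s * Complex.I) - 1)) := by
        congr 1
        · push_cast
          ring
        · refine integral_congr_ae (Eventually.of_forall fun s => ?_)
          simp only [Gc]
          ring

end AsianAuxSection
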